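/- Neither W(A₄) × W(I₂(5)) (isomorphic to Sym(5) × Dih(5)) nor W(A₅) × W(I₂(5)) (isomorphic to Sym(6) × Dih(5)) is a Beauville group. -/

import Mathlib

/-- `beauvilleSigma g h` is the set `Σ(g,h)`: the union over all integers `i` and all
`k` in the group of the conjugates `k⁻¹ gⁱ k`, `k⁻¹ hⁱ k` and `k⁻¹ (gh)ⁱ k`. -/
def beauvilleSigma {G : Type*} [Group G] (g h : G) : Set G :=
  {w | ∃ (i : ℤ) (k : G),
    w = k⁻¹ * g ^ i * k ∨ w = k⁻¹ * h ^ i * k ∨ w = k⁻¹ * (g * h) ^ i * k}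

/-- `{x₁,y₁}, {x₂,y₂}` is an (unmixed) Beauville structure on `G`:
both pairs generate `G` and `Σ(x₁,y₁) ∩ Σ(x₂,y₂) = {1}`. -/
def IsBeauvilleStructure {G : Type*} [Group G] (x₁ y₁ x₂ y₂ : G) : Prop :=
  Subgroup.closure {x₁, y₁} = ⊤ ∧ Subgroup.closure {x₂, y₂} = ⊤ ∧
    beauvilleSigma x₁ y₁ ∩ beauvilleSigma x₂ y₂ = {1}

/-- A group is a Beauville group if it admits a Beauville structure. -/
def IsBeauvilleGroup (G : Type*) [Group G] : Prop :=
  ∃ x₁ y₁ x₂ y₂ : G, IsBeauvilleStructure x₁ y₁ x₂ y₂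

/-- A group is a strongly real Beauville group if it admits a Beauville structure
`{x₁,y₁}, {x₂,y₂}` together with an automorphism `φ` and elements `g₁, g₂` such that
`gᵢ φ(xᵢ) gᵢ⁻¹ = xᵢ⁻¹` and `gᵢ φ(yᵢ) gᵢ⁻¹ = yᵢ⁻¹` for `i = 1, 2`. -/
def IsStronglyRealBeauvilleGroup (G : Type*) [Group G] : Prop :=
  ∃ x₁ y₁ x₂ y₂ : G, IsBeauvilleStructure x₁ y₁ x₂ y₂ ∧
    ∃ (φ : G ≃* G) (g₁ g₂ : G),
      g₁ * φ x₁ * g₁⁻¹ = x₁⁻¹ ∧ g₁ * φ y₁ * g₁⁻¹ = y₁⁻¹ ∧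
      g₂ * φ x₂ * g₂⁻¹ = x₂⁻¹ ∧ g₂ * φ y₂ * g₂⁻¹ = y₂⁻¹

namespace StmtAux

open CoxeterMatrix CoxeterSystem DihedralGroup


noncomputable def csI : CoxeterSystem (CoxeterMatrix.I 3) (CoxeterMatrix.I 3).Group :=
  (CoxeterMatrix.I 3).toCoxeterSystem

def fI : Fin 2 → DihedralGroup 5 := ![sr 0, sr 1]

lemma fI_liftable : CoxeterMatrix.IsLiftable (CoxeterMatrix.I 3) fI := by
  intro i i'
  fin_cases i <;> fin_cases i' <;> decide

noncomputable def φI : (CoxeterMatrix.I 3).Group →* DihedralGroup 5 :=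
  csI.lift ⟨fI, fI_liftable⟩

lemma φI_s0 : φI (csI.simple 0) = sr 0 := by
  rw [φI, CoxeterSystem.lift_apply_simple]; rfl

lemma φI_s1 : φI (csI.simple 1) = sr 1 := by
  rw [φI, CoxeterSystem.lift_apply_simple]; rfl

noncomputable abbrev cI : (CoxeterMatrix.I 3).Group := csI.simple 0 * csI.simple 1

lemma cI_pow_five : cI ^ 5 = 1 := by
  have := csI.simple_mul_simple_pow 0 1
  have h5 : (CoxeterMatrix.I 3) 0 1 = 5 := rfl
  rwa [h5] at this

lemma cI_pow_mod (a : ℕ) : cI ^ a = cI ^ (a % 5) := pow_eq_pow_mod a cI_pow_five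

lemma cI_key (u v : ZMod 5) : cI ^ (u + v).val = cI ^ u.val * cI ^ v.val := by
  rw [ZMod.val_add, ← pow_add, ← cI_pow_mod]

lemma cI_comm (a : ℕ) : cI ^ a * csI.simple 0 = csI.simple 0 * (cI ^ a)⁻¹ := by
  induction a with
  | zero => simp
  | succ a ih =>
    have hc : cI * csI.simple 0 = csI.simple 0 * cI⁻¹ := by
      rw [cI, mul_inv_rev, inv_simple, inv_simple, mul_assoc]
    calc cI ^ (a+1) * csI.simple 0 = cI ^ a * (cI * csI.simple 0) := by
          rw [pow_succ, mul_assoc]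
      _ = cI ^ a * csI.simple 0 * cI⁻¹ := by rw [hc, mul_assoc]
      _ = csI.simple 0 * ((cI ^ a)⁻¹ * cI⁻¹) := by rw [ih, mul_assoc]
      _ = csI.simple 0 * (cI⁻¹ ^ a * cI⁻¹ ^ 1) := by rw [inv_pow, pow_one]
      _ = csI.simple 0 * (cI ^ (a+1))⁻¹ := by rw [← pow_add, inv_pow]

noncomputable def ψI : DihedralGroup 5 → (CoxeterMatrix.I 3).Group
  | .r i => cI ^ i.val
  | .sr i => csI.simple 0 * cI ^ i.val

lemma ψI_aux (i j : ZMod 5) : (cI ^ i.val)⁻¹ * cI ^ j.val = cI ^ (j - i).val := by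
  have := cI_key i (j - i)
  rw [add_sub_cancel] at this
  rw [this]; group

lemma ψI_mul (x y : DihedralGroup 5) : ψI (x * y) = ψI x * ψI y := by
  cases x with
  | r i =>
    cases y with
    | r j => rw [r_mul_r]; exact cI_key i j
    | sr j =>
      rw [r_mul_sr]
      show csI.simple 0 * cI ^ (j - i).val = cI ^ i.val * (csI.simple 0 * cI ^ j.val)
      rw [← mul_assoc, cI_comm, mul_assoc, ψI_aux]
  | sr i =>
    cases y with
    | r j =>
      rw [sr_mul_r]
      show csI.simple 0 * cI ^ (i + j).val = csI.simple 0 * cI ^ i.val * cI ^ j.val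
      rw [cI_key, mul_assoc]
    | sr j =>
      rw [sr_mul_sr]
      show cI ^ (j - i).val = csI.simple 0 * cI ^ i.val * (csI.simple 0 * cI ^ j.val)
      rw [mul_assoc, ← mul_assoc (cI ^ i.val), cI_comm, ← mul_assoc, ← mul_assoc,
        simple_mul_simple_self, one_mul, ψI_aux]

noncomputable def ψIM : DihedralGroup 5 →* (CoxeterMatrix.I 3).Group where
  toFun := ψI
  map_one' := by show ψI (.r 0) = 1; show cI ^ (0 : ZMod 5).val = 1; simp
  map_mul' := ψI_mul

lemma ψI_φI : ∀ w, ψIM (φI w) = w := by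
  intro w
  have : ψIM.comp φI = MonoidHom.id _ := by
    apply csI.ext_simple
    intro i
    fin_cases i
    · show ψIM (φI (csI.simple 0)) = csI.simple 0
      rw [φI_s0]
      show csI.simple 0 * cI ^ (0 : ZMod 5).val = csI.simple 0
      simp
    · show ψIM (φI (csI.simple 1)) = csI.simple 1
      rw [φI_s1]
      show csI.simple 0 * cI ^ (1 : ZMod 5).val = csI.simple 1
      have : (1 : ZMod 5).val = 1 := rfl
      rw [this, pow_one, cI, ← mul_assoc, simple_mul_simple_self, one_mul]
  calc ψIM (φI w) = (ψIM.comp φI) w := rfl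
    _ = w := by rw [this]; rfl

lemma φI_injective : Function.Injective φI := by
  intro a b h
  have := ψI_φI a
  rw [h, ψI_φI] at this
  exact this.symm



open Equiv Equiv.Perm


open CoxeterMatrix CoxeterSystem Equiv

noncomputable def csA (n : ℕ) : CoxeterSystem (CoxeterMatrix.A n) (CoxeterMatrix.A n).Group :=
  (CoxeterMatrix.A n).toCoxeterSystem

noncomputable def sA (n : ℕ) (i : Fin n) : (CoxeterMatrix.A n).Group := (csA n).simple i

lemma Aₙ_apply (n : ℕ) (i j : Fin n) :
    (CoxeterMatrix.A n) i j =
      if i = j then 1 else if ((j : ℕ) + 1 = i ∨ (i : ℕ) + 1 = j) then 3 else 2 := rfl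

lemma Aₙ_eq_three {n : ℕ} {i j : Fin n} (h : (j : ℕ) + 1 = i ∨ (i : ℕ) + 1 = j) :
    (CoxeterMatrix.A n) i j = 3 := by
  have hne : i ≠ j := by
    intro he; subst he; omega
  rw [Aₙ_apply, if_neg hne, if_pos h]

lemma Aₙ_eq_two {n : ℕ} {i j : Fin n} (h1 : (j : ℕ) + 1 ≠ i) (h2 : (i : ℕ) + 1 ≠ j)
    (hne : i ≠ j) : (CoxeterMatrix.A n) i j = 2 := by
  rw [Aₙ_apply, if_neg hne, if_neg (by tauto)]

section W

variable {n : ℕ}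

lemma sA_mul_self (i : Fin n) : sA n i * sA n i = 1 := (csA n).simple_mul_simple_self i

lemma sA_braid {i j : Fin n} (h : (j : ℕ) + 1 = i ∨ (i : ℕ) + 1 = j) :
    sA n i * sA n j * sA n i = sA n j * sA n i * sA n j := by
  have h3 : (sA n i * sA n j) ^ 3 = 1 := by
    have := (csA n).simple_mul_simple_pow i j
    rwa [Aₙ_eq_three h] at this
  have e : sA n i * sA n j * sA n i * (sA n j * sA n i * sA n j) = 1 := by
    calc sA n i * sA n j * sA n i * (sA n j * sA n i * sA n j)
        = (sA n i * sA n j) ^ 3 := by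
          rw [pow_succ, pow_succ, pow_one]; simp only [mul_assoc]
      _ = 1 := h3
  have hinv : ∀ k : Fin n, (sA n k)⁻¹ = sA n k := fun k => (csA n).inv_simple k
  calc sA n i * sA n j * sA n i
      = (sA n j * sA n i * sA n j)⁻¹ := eq_inv_of_mul_eq_one_left e
    _ = (sA n j)⁻¹ * ((sA n i)⁻¹ * (sA n j)⁻¹) := by rw [mul_inv_rev, mul_inv_rev]
    _ = sA n j * (sA n i * sA n j) := by rw [hinv, hinv]
    _ = sA n j * sA n i * sA n j := by rw [mul_assoc]

lemma sA_comm {i j : Fin n} (h1 : (j : ℕ) + 1 ≠ i) (h2 : (i : ℕ) + 1 ≠ j) (hne : i ≠ j) :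
    sA n i * sA n j = sA n j * sA n i := by
  have h2' : (sA n i * sA n j) ^ 2 = 1 := by
    have := (csA n).simple_mul_simple_pow i j
    rwa [Aₙ_eq_two h1 h2 hne] at this
  have e2 : (sA n i * sA n j) * (sA n i * sA n j) = 1 := by rw [← pow_two]; exact h2'
  have e : (sA n i * sA n j) * (sA n j * sA n i) = 1 := by
    rw [mul_assoc, ← mul_assoc (sA n j), sA_mul_self, one_mul, sA_mul_self]
  exact mul_left_cancel (e2.trans e.symm)

end W


section Swaps

variable {α : Type*} [DecidableEq α]

lemma swap_conj (f : Perm α) (x y : α) :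
    f * Equiv.swap x y * f = Equiv.swap (f x) (f y) * (f * f) := by
  have h := Equiv.swap_apply_apply f x y
  calc f * Equiv.swap x y * f = (f * Equiv.swap x y * f⁻¹) * (f * f) := by group
    _ = Equiv.swap (f x) (f y) * (f * f) := by rw [← h]

lemma swap_swap_braid {a b c : α} (hab : a ≠ b) (hbc : b ≠ c) (hac : a ≠ c) :
    (Equiv.swap a b * Equiv.swap b c) ^ 3 = 1 := by
  set s := Equiv.swap a b with hs
  set t := Equiv.swap b c with ht
  have htt : t * t = 1 := Equiv.swap_mul_self b c
  have hss : s * s = 1 := Equiv.swap_mul_self a b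
  have hts : t * s * t = Equiv.swap a c := by
    rw [hs, ht, swap_conj, Equiv.swap_apply_of_ne_of_ne hab hac, Equiv.swap_apply_left,
      ← ht, htt, mul_one]
  have hsus : s * Equiv.swap a c * s = t := by
    rw [hs, swap_conj, Equiv.swap_apply_left, Equiv.swap_apply_of_ne_of_ne hac.symm hbc.symm,
      ← hs, hss, mul_one, ht]
  calc (s * t) ^ 3 = s * (t * s * t) * (s * t) := by
        rw [pow_succ, pow_succ, pow_one]; simp only [mul_assoc]
    _ = s * Equiv.swap a c * (s * t) := by rw [hts, mul_assoc, ← mul_assoc (Equiv.swap a c),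
        ← mul_assoc]
    _ = (s * Equiv.swap a c * s) * t := by simp only [mul_assoc]
    _ = t * t := by rw [hsus]
    _ = 1 := htt

lemma swap_swap_comm {a b c d : α} (hca : c ≠ a) (hcb : c ≠ b) (hda : d ≠ a) (hdb : d ≠ b)
    (hab : a ≠ b) (hcd : c ≠ d) : (Equiv.swap a b * Equiv.swap c d) ^ 2 = 1 := by
  set s := Equiv.swap a b with hs
  set t := Equiv.swap c d with ht
  have htt : t * t = 1 := Equiv.swap_mul_self c d
  have hss : s * s = 1 := Equiv.swap_mul_self a b
  have hts : t * s * t = s := by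
    rw [hs, ht, swap_conj, Equiv.swap_apply_of_ne_of_ne hca.symm hda.symm,
      Equiv.swap_apply_of_ne_of_ne hcb.symm hdb.symm, ← ht, htt, mul_one]
  calc (s * t) ^ 2 = s * (t * s * t) := by
        rw [pow_succ, pow_one]; simp only [mul_assoc]  -- check shape
    _ = s * s := by rw [hts]
    _ = 1 := hss

end Swaps

section Phi

variable {n : ℕ}

lemma φA_liftable (n : ℕ) : CoxeterMatrix.IsLiftable (CoxeterMatrix.A n)
    (fun i : Fin n => Equiv.swap (Fin.castSucc i) (Fin.succ i)) := by
  intro i j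
  show (Equiv.swap (Fin.castSucc i) (Fin.succ i) * Equiv.swap (Fin.castSucc j) (Fin.succ j)) ^
    ((CoxeterMatrix.A n) i j) = 1
  by_cases hij : i = j
  · subst hij
    rw [Aₙ_apply, if_pos rfl, pow_one, Equiv.swap_mul_self]
  · by_cases hadj : (j : ℕ) + 1 = (i : ℕ) ∨ (i : ℕ) + 1 = (j : ℕ)
    · rw [Aₙ_eq_three hadj]
      rcases hadj with hadj | hadj
      · have h1 : Fin.castSucc i = Fin.succ j := by
          apply Fin.ext; simp [hadj.symm]
        rw [h1, Equiv.swap_comm (Fin.succ j) (Fin.succ i),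
          Equiv.swap_comm (Fin.castSucc j) (Fin.succ j)]
        exact swap_swap_braid
          (by simp only [ne_eq, Fin.ext_iff, Fin.val_succ, Fin.coe_castSucc]; omega)
          (by simp only [ne_eq, Fin.ext_iff, Fin.val_succ, Fin.coe_castSucc]; omega)
          (by simp only [ne_eq, Fin.ext_iff, Fin.val_succ, Fin.coe_castSucc]; omega)
      · have h1 : Fin.castSucc j = Fin.succ i := by
          apply Fin.ext; simp [hadj]
        rw [h1]
        exact swap_swap_braid
          (by simp only [ne_eq, Fin.ext_iff, Fin.val_succ, Fin.coe_castSucc]; omega)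
          (by simp only [ne_eq, Fin.ext_iff, Fin.val_succ, Fin.coe_castSucc]; omega)
          (by simp only [ne_eq, Fin.ext_iff, Fin.val_succ, Fin.coe_castSucc]; omega)
    · push_neg at hadj
      have hv : (i : ℕ) ≠ (j : ℕ) := fun hc => hij (Fin.ext hc)
      have h1 := hadj.1; have h2 := hadj.2
      rw [Aₙ_eq_two hadj.1 hadj.2 hij]
      exact swap_swap_comm
        (by simp only [ne_eq, Fin.ext_iff, Fin.val_succ, Fin.coe_castSucc]; omega)
        (by simp only [ne_eq, Fin.ext_iff, Fin.val_succ, Fin.coe_castSucc]; omega)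
        (by simp only [ne_eq, Fin.ext_iff, Fin.val_succ, Fin.coe_castSucc]; omega)
        (by simp only [ne_eq, Fin.ext_iff, Fin.val_succ, Fin.coe_castSucc]; omega)
        (by simp only [ne_eq, Fin.ext_iff, Fin.val_succ, Fin.coe_castSucc]; omega)
        (by simp only [ne_eq, Fin.ext_iff, Fin.val_succ, Fin.coe_castSucc]; omega)

noncomputable def φA (n : ℕ) : (CoxeterMatrix.A n).Group →* Perm (Fin (n + 1)) :=
  (csA n).lift ⟨fun i : Fin n => Equiv.swap (Fin.castSucc i) (Fin.succ i), φA_liftable n⟩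

lemma φA_simple (i : Fin n) : φA n (sA n i) = Equiv.swap (Fin.castSucc i) (Fin.succ i) :=
  (csA n).lift_apply_simple _ i

end Phi


section Tower

lemma Aₙ_castSucc {n : ℕ} (i j : Fin n) :
    (CoxeterMatrix.A (n + 1)) (Fin.castSucc i) (Fin.castSucc j) = (CoxeterMatrix.A n) i j := by
  rw [Aₙ_apply, Aₙ_apply]
  simp only [Fin.castSucc_inj, Fin.coe_castSucc]

noncomputable def ι (n : ℕ) : (CoxeterMatrix.A n).Group →* (CoxeterMatrix.A (n + 1)).Group :=
  (csA n).lift ⟨fun i : Fin n => sA (n + 1) (Fin.castSucc i), by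
    intro i j
    show (sA (n+1) (Fin.castSucc i) * sA (n+1) (Fin.castSucc j)) ^ ((CoxeterMatrix.A n) i j) = 1
    rw [← Aₙ_castSucc i j]
    exact (csA (n+1)).simple_mul_simple_pow _ _⟩

lemma ι_simple {n : ℕ} (i : Fin n) : ι n (sA n i) = sA (n + 1) (Fin.castSucc i) :=
  (csA n).lift_apply_simple _ i

/-- `suf n k = s_n * s_(n-1) * ... * s_k` in `W(A_(n+1))`, `1` if `k > n`. -/
noncomputable def suf (n : ℕ) (k : ℕ) : (CoxeterMatrix.A (n + 1)).Group :=
  if h : k ≤ n then suf n (k + 1) * sA (n + 1) ⟨k, by omega⟩ else 1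
termination_by n + 1 - k

lemma suf_of_gt {n k : ℕ} (h : n < k) : suf n k = 1 := by
  rw [suf, dif_neg (by omega)]

lemma suf_of_le {n k : ℕ} (h : k ≤ n) : suf n k = suf n (k + 1) * sA (n + 1) ⟨k, by omega⟩ := by
  rw [suf]; rw [dif_pos h]

lemma suf_comm (n : ℕ) (k : ℕ) (i : Fin (n + 1)) (h : (i : ℕ) + 2 ≤ k) :
    suf n k * sA (n + 1) i = sA (n + 1) i * suf n k := by
  by_cases hk : k ≤ n
  · rw [suf_of_le hk]
    have hcomm : sA (n+1) ⟨k, by omega⟩ * sA (n+1) i = sA (n+1) i * sA (n+1) ⟨k, by omega⟩ :=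
      sA_comm (by first | omega | (simp only [ne_eq, Fin.ext_iff]; omega)) (by first | omega | (simp only [ne_eq, Fin.ext_iff]; omega))
        (by first | omega | (simp only [ne_eq, Fin.ext_iff]; omega))
    rw [mul_assoc, hcomm, ← mul_assoc, suf_comm n (k + 1) i (by omega), mul_assoc]
  · rw [suf_of_gt (by omega), one_mul, mul_one]
termination_by n + 1 - k

lemma suf_braid (n : ℕ) (k : ℕ) (i : Fin (n + 1)) (hki : k < (i : ℕ)) :
    suf n k * sA (n + 1) i = sA (n + 1) ⟨(i : ℕ) - 1, by omega⟩ * suf n k := by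
  have hin : (i : ℕ) ≤ n := by omega
  have hkn : k ≤ n := by omega
  rw [suf_of_le hkn]
  by_cases hadj : k + 1 = (i : ℕ)
  · -- braid case
    have hk1n : k + 1 ≤ n := by omega
    have hbr : sA (n+1) ⟨k+1, by omega⟩ * (sA (n+1) ⟨k, by omega⟩ * sA (n+1) ⟨k+1, by omega⟩)
        = sA (n+1) ⟨k, by omega⟩ * (sA (n+1) ⟨k+1, by omega⟩ * sA (n+1) ⟨k, by omega⟩) := by
      have := sA_braid (n := n+1) (i := ⟨k+1, by omega⟩) (j := ⟨k, by omega⟩) (Or.inl rfl)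
      simpa only [mul_assoc] using this
    have hfar : suf n (k + 2) * sA (n+1) ⟨k, by omega⟩
        = sA (n+1) ⟨k, by omega⟩ * suf n (k + 2) :=
      suf_comm n (k+2) ⟨k, by omega⟩ (by first | omega | (simp only [ne_eq, Fin.ext_iff]; omega))
    have hsi : sA (n+1) i = sA (n+1) ⟨k+1, by omega⟩ := by
      congr 1
      apply Fin.ext
      show (i : ℕ) = k + 1
      omega
    have hsi' : sA (n+1) (⟨(i : ℕ) - 1, by omega⟩ : Fin (n+1))
        = sA (n+1) ⟨k, by omega⟩ := by
      congr 1
      apply Fin.ext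
      show (i : ℕ) - 1 = k
      omega
    rw [hsi, hsi']
    simp only [mul_assoc]
    rw [suf_of_le hk1n]
    simp only [mul_assoc]
    rw [hbr, ← mul_assoc (suf n (k+2)), hfar]
    simp only [mul_assoc]
  · -- commuting case
    have hcomm : sA (n+1) ⟨k, by omega⟩ * sA (n+1) i = sA (n+1) i * sA (n+1) ⟨k, by omega⟩ :=
      sA_comm (by first | omega | (simp only [ne_eq, Fin.ext_iff]; omega)) (by first | omega | (simp only [ne_eq, Fin.ext_iff]; omega))
        (by first | omega | (simp only [ne_eq, Fin.ext_iff]; omega))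
    rw [mul_assoc, hcomm, ← mul_assoc, suf_braid n (k + 1) i (by omega), mul_assoc]
termination_by n + 1 - k

end Tower


section Span

lemma span (n : ℕ) (w : (CoxeterMatrix.A (n+1)).Group) :
    ∃ (w' : (CoxeterMatrix.A n).Group) (k : ℕ), k ≤ n + 1 ∧ w = ι n w' * suf n k := by
  obtain ⟨l, rfl⟩ := (csA (n+1)).wordProd_surjective w
  induction l using List.reverseRecOn with
  | nil =>
    refine ⟨1, n + 1, le_refl _, ?_⟩
    rw [map_one, CoxeterSystem.wordProd_nil, one_mul, suf_of_gt (by omega)]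
  | append_singleton l i ih =>
    obtain ⟨w', k, hk, hw⟩ := ih
    rw [← List.concat_eq_append, CoxeterSystem.wordProd_concat, hw]
    have hsimple : (csA (n + 1)).simple i = sA (n + 1) i := rfl
    rw [hsimple]
    by_cases h1 : (i : ℕ) + 2 ≤ k
    · have hi : (i : ℕ) < n := by omega
      refine ⟨w' * sA n ⟨(i : ℕ), hi⟩, k, hk, ?_⟩
      rw [map_mul, ι_simple]
      have hcast : Fin.castSucc (⟨(i : ℕ), hi⟩ : Fin n) = i := Fin.ext rfl
      rw [hcast, mul_assoc, mul_assoc, suf_comm n k i h1]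
    · by_cases h2 : (i : ℕ) + 1 = k
      · refine ⟨w', (i : ℕ), by omega, ?_⟩
        rw [suf_of_le (show (i : ℕ) ≤ n by omega)]
        have hii : (⟨(i : ℕ), by omega⟩ : Fin (n+1)) = i := Fin.ext rfl
        rw [hii, h2, ← mul_assoc]
      · by_cases h3 : (i : ℕ) = k
        · refine ⟨w', k + 1, by omega, ?_⟩
          have hkn : k ≤ n := by omega
          have hi : i = (⟨k, by omega⟩ : Fin (n+1)) := Fin.ext h3
          rw [suf_of_le hkn, hi]
          simp only [mul_assoc]
          rw [sA_mul_self, mul_one]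
        · have hki : k < (i : ℕ) := by omega
          have him : (i : ℕ) - 1 < n := by omega
          refine ⟨w' * sA n ⟨(i : ℕ) - 1, him⟩, k, hk, ?_⟩
          rw [map_mul, ι_simple]
          have hcast : Fin.castSucc (⟨(i : ℕ) - 1, him⟩ : Fin n)
              = (⟨(i : ℕ) - 1, by omega⟩ : Fin (n + 1)) := Fin.ext rfl
          rw [hcast, mul_assoc, suf_braid n k i hki, ← mul_assoc]

end Span

section Inj

lemma viaEmbedding_swap {α β : Type*} [DecidableEq α] [DecidableEq β] (f : α ↪ β) (a b : α) :
    Equiv.Perm.viaEmbedding (Equiv.swap a b) f = Equiv.swap (f a) (f b) := by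
  ext x
  by_cases hx : x ∈ Set.range f
  · obtain ⟨y, rfl⟩ := hx
    rw [Equiv.Perm.viaEmbedding_apply]
    rcases eq_or_ne y a with rfl | hya
    · rw [Equiv.swap_apply_left, Equiv.swap_apply_left]
    rcases eq_or_ne y b with rfl | hyb
    · rw [Equiv.swap_apply_right, Equiv.swap_apply_right]
    rw [Equiv.swap_apply_of_ne_of_ne hya hyb,
      Equiv.swap_apply_of_ne_of_ne (f.injective.ne hya) (f.injective.ne hyb)]
  · rw [Equiv.Perm.viaEmbedding_apply_of_notMem _ _ x hx,
      Equiv.swap_apply_of_ne_of_ne (fun h => hx ⟨a, h.symm⟩) (fun h => hx ⟨b, h.symm⟩)]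

lemma phi_comp_ι (n : ℕ) : (φA (n+1)).comp (ι n) =
    (Equiv.Perm.viaEmbeddingHom (Fin.castSuccEmb)).comp (φA n) := by
  apply (csA n).ext_simple
  intro i
  have h1 : (φA (n+1)).comp (ι n) ((csA n).simple i)
      = Equiv.swap (Fin.castSucc (Fin.castSucc i)) (Fin.succ (Fin.castSucc i)) := by
    rw [MonoidHom.comp_apply]
    rw [show (csA n).simple i = sA n i from rfl, ι_simple, φA_simple]
  have h2 : ((Equiv.Perm.viaEmbeddingHom (Fin.castSuccEmb)).comp (φA n)) ((csA n).simple i)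
      = Equiv.swap (Fin.castSucc (Fin.castSucc i)) (Fin.castSucc (Fin.succ i)) := by
    rw [MonoidHom.comp_apply, show (csA n).simple i = sA n i from rfl, φA_simple,
      Equiv.Perm.viaEmbeddingHom_apply, viaEmbedding_swap]
    rfl
  rw [h1, h2]
  have : Fin.succ (Fin.castSucc i) = Fin.castSucc (Fin.succ i) := Fin.ext rfl
  rw [this]

lemma phi_suf (n : ℕ) (k : ℕ) (hk : k ≤ n + 1) :
    (φA (n+1)) (suf n k) ⟨k, by omega⟩ = Fin.last (n + 1) := by
  by_cases h : k ≤ n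
  · rw [suf_of_le h, map_mul, Equiv.Perm.mul_apply, φA_simple]
    have e1 : (⟨k, by omega⟩ : Fin (n + 2)) = Fin.castSucc (⟨k, by omega⟩ : Fin (n+1)) :=
      Fin.ext rfl
    rw [e1, Equiv.swap_apply_left]
    have e2 : Fin.succ (⟨k, by omega⟩ : Fin (n+1)) = (⟨k + 1, by omega⟩ : Fin (n + 2)) :=
      Fin.ext rfl
    rw [e2]
    exact phi_suf n (k + 1) (by omega)
  · rw [suf_of_gt (by omega), map_one, Equiv.Perm.one_apply]
    refine Fin.ext ?_
    show k = n + 1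
    omega
termination_by n + 1 - k

theorem φA_injective : ∀ n, Function.Injective (φA n) := by
  intro n
  induction n with
  | zero =>
    have htriv : ∀ w : (CoxeterMatrix.A 0).Group, w = 1 := by
      intro w
      obtain ⟨l, rfl⟩ := (csA 0).wordProd_surjective w
      cases l with
      | nil => exact (csA 0).wordProd_nil
      | cons h t => exact h.elim0
    intro a b _
    rw [htriv a, htriv b]
  | succ n IH =>
    rw [injective_iff_map_eq_one]
    intro w hw
    obtain ⟨w', k, hk, rfl⟩ := span n w
    rw [map_mul] at hw
    have hcomp : φA (n+1) (ι n w')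
        = Equiv.Perm.viaEmbeddingHom Fin.castSuccEmb (φA n w') := by
      have := congrArg (fun f : _ →* _ => f w') (phi_comp_ι n)
      exact this
    by_cases hkn : k ≤ n
    · exfalso
      have happ := congrArg (fun p : Perm (Fin (n+2)) => p ⟨k, by omega⟩) hw
      simp only [Equiv.Perm.mul_apply, Equiv.Perm.one_apply] at happ
      rw [phi_suf n k (by omega), hcomp] at happ
      have hlast : Fin.last (n + 1) ∉ Set.range (Fin.castSuccEmb : Fin (n+1) ↪ Fin (n+2)) := by
        rintro ⟨y, hy⟩
        have := congrArg Fin.val hy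
        simp only [Fin.coe_castSuccEmb] at this
        rw [Fin.coe_castSucc, Fin.val_last] at this
        omega
      rw [Equiv.Perm.viaEmbeddingHom_apply,
        Equiv.Perm.viaEmbedding_apply_of_notMem _ _ _ hlast] at happ
      have hvc := congrArg Fin.val happ
      rw [Fin.val_last] at hvc
      have hred : ((⟨k, by omega⟩ : Fin (n+2)) : ℕ) = k := rfl
      rw [hred] at hvc
      omega
    · have hk1 : k = n + 1 := by omega
      subst hk1
      rw [suf_of_gt (by omega), map_one, mul_one, hcomp] at hw
      have h1 : φA n w' = 1 :=
        Equiv.Perm.viaEmbeddingHom_injective Fin.castSuccEmb (by rw [hw, map_one])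
      have h2 : w' = 1 := (injective_iff_map_eq_one (φA n)).mp IH w' h1
      rw [h2, map_one, one_mul, suf_of_gt (by omega)]

end Inj




open Equiv Equiv.Perm DihedralGroup

/-- In `Sₘ` with `m ≤ 6`, an element of order divisible by 5 is even. -/
lemma sign_eq_one_of_five_dvd {m : ℕ} (hm : m ≤ 6) (σ : Perm (Fin m))
    (h5 : 5 ∣ orderOf σ) : Perm.sign σ = 1 := by
  rw [← Equiv.Perm.lcm_cycleType] at h5
  -- find a cycle length divisible by 5
  have hexists : ∃ l ∈ σ.cycleType, 5 ∣ l := by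
    classical
    revert h5
    refine Multiset.induction_on σ.cycleType ?_ ?_
    · intro h; exfalso; rw [Multiset.lcm_zero] at h; exact absurd (Nat.le_of_dvd one_pos h) (by norm_num)
    · intro a s ih h
      rw [Multiset.lcm_cons] at h
      have : (5 : ℕ) ∣ a * s.lcm := h.trans (Nat.lcm_dvd_mul a s.lcm)
      rcases (Nat.Prime.dvd_mul (by norm_num)).mp this with h' | h'
      · exact ⟨a, Multiset.mem_cons_self a s, h'⟩
      · obtain ⟨l, hl, hldvd⟩ := ih h'
        exact ⟨l, Multiset.mem_cons_of_mem hl, hldvd⟩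
  obtain ⟨l, hl, hldvd⟩ := hexists
  have h2 : 2 ≤ l := Equiv.Perm.two_le_of_mem_cycleType hl
  have hle : l ≤ 6 := le_trans (Equiv.Perm.le_card_support_of_mem_cycleType hl)
    (le_trans (Finset.card_le_univ _) (by simp [hm]))
  have hl5 : l = 5 := by
    obtain ⟨c, rfl⟩ := hldvd
    omega
  subst hl5
  have hct : σ.cycleType = {5} := by
    refine Equiv.Perm.cycleType_of_card_le_mem_cycleType_add_two ?_ hl
    simp; omega
  rw [Equiv.Perm.sign_of_cycleType, hct]
  decide

lemma hom_detect {G : Type*} [Group G] (f : G →* ℤˣ) {x y : G}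
    (hxy : Subgroup.closure ({x, y} : Set G) = ⊤) (g : G) (hg : f g = -1) :
    f x = -1 ∨ f y = -1 := by
  by_contra hcon
  push_neg at hcon
  have hx : f x = 1 := (Int.units_eq_one_or (f x)).resolve_right hcon.1
  have hy : f y = 1 := (Int.units_eq_one_or (f y)).resolve_right hcon.2
  have : ∀ w : G, f w = 1 := by
    intro w
    have hw : w ∈ Subgroup.closure ({x, y} : Set G) := by rw [hxy]; trivial
    induction hw using Subgroup.closure_induction with
    | mem z hz => rcases hz with rfl | rfl <;> assumption
    | one => exact map_one f
    | mul a b _ _ ha hb => rw [map_mul, ha, hb, one_mul]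
    | inv a _ ha => rw [map_inv, ha]; rfl
  rw [this g] at hg
  exact absurd hg (by decide)

/-- the reflection-detecting homomorphism on the dihedral group -/
def δ : DihedralGroup 5 →* ℤˣ where
  toFun g := match g with
    | .r _ => 1
    | .sr _ => -1
  map_one' := rfl
  map_mul' x y := by
    cases x <;> cases y <;> simp [r_mul_r, r_mul_sr, sr_mul_r, sr_mul_sr]

@[simp] lemma δ_r (i : ZMod 5) : δ (.r i) = 1 := rfl
@[simp] lemma δ_sr (i : ZMod 5) : δ (.sr i) = -1 := rfl

lemma r_pow (t : ZMod 5) (E : ℕ) : (DihedralGroup.r t) ^ E = .r (E * t) := by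
  induction E with
  | zero => rw [pow_zero, Nat.cast_zero, zero_mul, DihedralGroup.one_def]
  | succ E ih =>
    rw [pow_succ, ih, r_mul_r]
    congr 1
    push_cast
    ring

section Core

variable {WA WI : Type*} [Group WA] [Group WI] {m : ℕ}
  (φA : WA →* Perm (Fin m)) (φI : WI →* DihedralGroup 5)

/-- the two sign homomorphisms on `WA × WI` -/
def χh : (WA × WI) →* ℤˣ := (Perm.sign.comp φA).comp (MonoidHom.fst WA WI)

def εh : (WA × WI) →* ℤˣ :=
  χh φA * ((δ.comp φI).comp (MonoidHom.snd WA WI))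

lemma χh_apply (w : WA × WI) : χh φA w = Perm.sign (φA w.1) := rfl

lemma εh_apply (w : WA × WI) : εh φA φI w = Perm.sign (φA w.1) * δ (φI w.2) := rfl

variable {φA} {φI}
variable (hA : Function.Injective φA) (hI : Function.Injective φI)
  (hsign : ∀ σ : Perm (Fin m), 5 ∣ orderOf σ → Perm.sign σ = 1)
  (wodd : WA) (hodd : Perm.sign (φA wodd) = -1)
  (w0 w1 : WI) (h0 : φI w0 = .sr 0) (h1 : φI w1 = .sr 1)

include h0 h1 in
/-- if both generators have dihedral parts in the subgroup `{1, sr j}`, no generation -/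
lemma not_small {x y : WA × WI} (hxy : Subgroup.closure ({x, y} : Set (WA × WI)) = ⊤)
    (j : ZMod 5) (hx : φI x.2 = .r 0 ∨ φI x.2 = .sr j)
    (hy : φI y.2 = .r 0 ∨ φI y.2 = .sr j) : False := by
  have key : ∀ w : WA × WI, φI w.2 = .r 0 ∨ φI w.2 = .sr j := by
    intro w
    have hw : w ∈ Subgroup.closure ({x, y} : Set (WA × WI)) := by rw [hxy]; trivial
    induction hw using Subgroup.closure_induction with
    | mem z hz => rcases hz with rfl | rfl <;> assumption
    | one =>
      left
      have : ((1 : WA × WI)).2 = (1 : WI) := rfl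
      rw [this, map_one, DihedralGroup.one_def]
    | mul a b _ _ ha hb =>
      have : φI (a * b).2 = φI a.2 * φI b.2 := by rw [Prod.snd_mul, map_mul]
      rw [this]
      rcases ha with ha | ha <;> rcases hb with hb | hb <;> rw [ha, hb]
      · left; rw [r_mul_r, add_zero]
      · right; rw [r_mul_sr, sub_zero]
      · right; rw [sr_mul_r, add_zero]
      · left; rw [sr_mul_sr, sub_self]
    | inv a _ ha =>
      have : φI (a⁻¹).2 = (φI a.2)⁻¹ := by rw [Prod.snd_inv, map_inv]
      rw [this]
      rcases ha with ha | ha <;> rw [ha]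
      · left
        rw [← DihedralGroup.one_def, inv_one, DihedralGroup.one_def]
      · right
        exact inv_eq_of_mul_eq_one_right (sr_mul_self j)
  have k0 := key (1, w0)
  have k1 := key (1, w1)
  simp only [h0, h1] at k0 k1
  rcases k0 with k0 | k0
  · exact absurd k0 (by decide)
  · rcases k1 with k1 | k1
    · exact absurd k1 (by decide)
    · rw [DihedralGroup.sr.injEq] at k0 k1
      rw [← k0] at k1
      exact absurd k1 (by decide)


include hA hI hsign wodd hodd w0 w1 h0 h1 in
lemma r_one_mem {x y : WA × WI} (hxy : Subgroup.closure ({x, y} : Set (WA × WI)) = ⊤) :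
    ∃ z : WA × WI, z ∈ beauvilleSigma x y ∧ z.1 = 1 ∧ φI z.2 = .r 1 := by
  haveI : Fact (Nat.Prime 5) := ⟨by norm_num⟩
  -- Step 1: find the element of the triple with nontrivial rotation part
  have step1 : ∃ (u : WA × WI) (t : ZMod 5), t ≠ 0 ∧ φI u.2 = .r t ∧
      ((u = x ∧ (∃ j, φI y.2 = .sr j)) ∨
       (u = y ∧ (∃ i, φI x.2 = .sr i)) ∨
       (u = x * y ∧ (∃ i, φI x.2 = .sr i) ∧ (∃ j, φI y.2 = .sr j))) := by
    rcases hax : φI x.2 with i | i <;> rcases hay : φI y.2 with j | j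
    · -- both rotations: no generation
      exfalso
      have := hom_detect ((δ.comp φI).comp (MonoidHom.snd WA WI)) hxy (1, w0)
        (by simp [h0])
      simp [hax, hay] at this
    · -- x rotation, y reflection
      by_cases hi : i = 0
      · exact absurd (not_small w0 w1 h0 h1 hxy j
          (Or.inl (hi ▸ hax)) (Or.inr hay)) id
      · exact ⟨x, i, hi, hax, Or.inl ⟨rfl, j, rfl⟩⟩
    · -- x reflection, y rotation
      by_cases hj : j = 0
      · exact absurd (not_small w0 w1 h0 h1 hxy i
          (Or.inr hax) (Or.inl (hj ▸ hay))) id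
      · exact ⟨y, j, hj, hay, Or.inr (Or.inl ⟨rfl, i, rfl⟩)⟩
    · -- both reflections
      by_cases hij : j - i = 0
      · have hji : j = i := by rwa [sub_eq_zero] at hij
        exact absurd (not_small w0 w1 h0 h1 hxy i
          (Or.inr hax) (Or.inr (hji ▸ hay))) id
      · refine ⟨x * y, j - i, hij, ?_, Or.inr (Or.inr ⟨rfl, ⟨i, rfl⟩, ⟨j, rfl⟩⟩)⟩
        have h2 : (x * y).2 = x.2 * y.2 := rfl
        rw [h2, map_mul, hax, hay, sr_mul_sr]
  obtain ⟨u, t, ht, hu, hcase⟩ := step1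
  -- Step 2: the first coordinate of u has order coprime to 5
  have h5 : ¬ (5 ∣ orderOf (φA u.1)) := by
    intro hdvd
    have hsu : Perm.sign (φA u.1) = 1 := hsign _ hdvd
    have hεu : εh φA φI u = 1 := by rw [εh_apply, hsu, hu, δ_r, one_mul]
    have hεdet := hom_detect (εh φA φI) hxy (wodd, 1)
      (by rw [εh_apply]
          have hh : φI (wodd, (1:WI)).2 = 1 := map_one φI
          rw [hh, map_one, mul_one]
          exact hodd)
    have hχdet := hom_detect (χh φA) hxy (wodd, 1) (by rw [χh_apply]; exact hodd)
    rcases hcase with ⟨rfl, j, hy⟩ | ⟨rfl, i, hx⟩ | ⟨rfl, hx, hy⟩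
    · -- u = x
      have hεy : εh φA φI y = -1 := by
        rcases hεdet with h | h
        · rw [hεu] at h; exact absurd h (by decide)
        · exact h
      rw [εh_apply, hy, δ_sr] at hεy
      have hsy : Perm.sign (φA y.1) = 1 := by
        rcases Int.units_eq_one_or (Perm.sign (φA y.1)) with h | h
        · exact h
        · rw [h] at hεy; exact absurd hεy (by decide)
      rcases hχdet with h | h
      · rw [χh_apply, hsu] at h; exact absurd h (by decide)
      · rw [χh_apply, hsy] at h; exact absurd h (by decide)
    · -- u = y
      have hεx : εh φA φI x = -1 := by
        rcases hεdet with h | h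
        · exact h
        · rw [hεu] at h; exact absurd h (by decide)
      rw [εh_apply, hx, δ_sr] at hεx
      have hsx : Perm.sign (φA x.1) = 1 := by
        rcases Int.units_eq_one_or (Perm.sign (φA x.1)) with h | h
        · exact h
        · rw [h] at hεx; exact absurd hεx (by decide)
      rcases hχdet with h | h
      · rw [χh_apply, hsx] at h; exact absurd h (by decide)
      · rw [χh_apply, hsu] at h; exact absurd h (by decide)
    · -- u = x * y
      obtain ⟨i, hx⟩ := hx
      obtain ⟨j, hy⟩ := hy
      have hprod : Perm.sign (φA x.1) * Perm.sign (φA y.1) = 1 := by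
        have : (x * y).1 = x.1 * y.1 := rfl
        rw [this, map_mul, map_mul] at hsu
        exact hsu
      have hεx : εh φA φI x = Perm.sign (φA x.1) * -1 := by rw [εh_apply, hx, δ_sr]
      have hεy : εh φA φI y = Perm.sign (φA y.1) * -1 := by rw [εh_apply, hy, δ_sr]
      have hsx : Perm.sign (φA x.1) = 1 ∧ Perm.sign (φA y.1) = 1 := by
        rcases Int.units_eq_one_or (Perm.sign (φA x.1)) with h | h <;>
          rcases Int.units_eq_one_or (Perm.sign (φA y.1)) with h' | h'
        · exact ⟨h, h'⟩
        · rw [h, h'] at hprod; exact absurd hprod (by decide)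
        · rw [h, h'] at hprod; exact absurd hprod (by decide)
        · exfalso
          rw [h] at hεx; rw [h'] at hεy
          rcases hεdet with hd | hd
          · rw [hεx] at hd; exact absurd hd (by decide)
          · rw [hεy] at hd; exact absurd hd (by decide)
      rcases hχdet with h | h
      · rw [χh_apply, hsx.1] at h; exact absurd h (by decide)
      · rw [χh_apply, hsx.2] at h; exact absurd h (by decide)
  -- Step 3: construct the witness
  set N := orderOf (φA u.1) with hN
  have hNpos : 0 < N := orderOf_pos (φA u.1)
  have hu1 : u.1 ^ N = 1 := by
    apply hA
    rw [map_pow, map_one, pow_orderOf_eq_one]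
  have hN0 : (N : ZMod 5) ≠ 0 := fun hc =>
    h5 ((ZMod.natCast_eq_zero_iff N 5).mp hc)
  have hNt : (N : ZMod 5) * t ≠ 0 := mul_ne_zero hN0 ht
  set k : ZMod 5 := ((N : ZMod 5) * t)⁻¹ with hk
  set E : ℕ := N * k.val with hE
  refine ⟨u ^ E, ?_, ?_, ?_⟩
  · -- membership in beauvilleSigma
    refine ⟨(E : ℤ), 1, ?_⟩
    have huE : u ^ (E : ℤ) = u ^ E := zpow_natCast u E
    rcases hcase with ⟨rfl, -⟩ | ⟨rfl, -⟩ | ⟨rfl, -⟩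
    · left; rw [inv_one, one_mul, mul_one, huE]
    · right; left; rw [inv_one, one_mul, mul_one, huE]
    · right; right; rw [inv_one, one_mul, mul_one, huE]
  · have : (u ^ E).1 = u.1 ^ E := rfl
    rw [this, hE, pow_mul, hu1, one_pow]
  · have : (u ^ E).2 = u.2 ^ E := rfl
    rw [this, map_pow, hu, r_pow]
    congr 1
    rw [hE]
    push_cast
    rw [ZMod.natCast_zmod_val, mul_assoc, mul_comm k t, ← mul_assoc, hk]
    exact mul_inv_cancel₀ hNt

include hA hI hsign wodd hodd w0 w1 h0 h1 in
theorem not_beauville : ¬ IsBeauvilleGroup (WA × WI) := by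
  rintro ⟨x1, y1, x2, y2, hc1, hc2, hint⟩
  obtain ⟨z1, hz1, hz11, hz12⟩ := r_one_mem hA hI hsign wodd hodd w0 w1 h0 h1 hc1
  obtain ⟨z2, hz2, hz21, hz22⟩ := r_one_mem hA hI hsign wodd hodd w0 w1 h0 h1 hc2
  have hz : z1 = z2 := Prod.ext (hz11.trans hz21.symm) (hI (hz12.trans hz22.symm))
  have hmem : z1 ∈ beauvilleSigma x1 y1 ∩ beauvilleSigma x2 y2 := ⟨hz1, hz ▸ hz2⟩
  rw [hint, Set.mem_singleton_iff] at hmem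
  rw [hmem] at hz12
  simp only [Prod.snd_one, map_one] at hz12
  rw [DihedralGroup.one_def, DihedralGroup.r.injEq] at hz12
  exact absurd hz12.symm (by decide)

end Core



end StmtAux

/-- Neither `W(A₄) × W(I₂(5))` (isomorphic to `Sym(5) × Dih(5)`) nor `W(A₅) × W(I₂(5))`
(isomorphic to `Sym(6) × Dih(5)`) is a Beauville group. (Note `CoxeterMatrix.I 3` is
the Coxeter matrix of type `I₂(5)`.) -/
theorem stmt_17 :
    ¬ IsBeauvilleGroup ((CoxeterMatrix.A 4).Group × (CoxeterMatrix.I 3).Group) ∧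
    ¬ IsBeauvilleGroup ((CoxeterMatrix.A 5).Group × (CoxeterMatrix.I 3).Group) := by
  constructor
  · exact StmtAux.not_beauville (StmtAux.φA_injective 4) StmtAux.φI_injective
      (StmtAux.sign_eq_one_of_five_dvd (by norm_num))
      (StmtAux.sA 4 0)
      (by rw [StmtAux.φA_simple]; exact Equiv.Perm.sign_swap (by decide))
      _ _ StmtAux.φI_s0 StmtAux.φI_s1
  · exact StmtAux.not_beauville (StmtAux.φA_injective 5) StmtAux.φI_injective
      (StmtAux.sign_eq_one_of_five_dvd (by norm_num))
      (StmtAux.sA 5 0)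
      (by rw [StmtAux.φA_simple]; exact Equiv.Perm.sign_swap (by decide))
      _ _ StmtAux.φI_s0 StmtAux.φI_s1
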